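/- Let C be a continuum in a metric space with diam(C) > 0, and let 0 < ε < diam(C)/2. Then the packing number satisfies P(C,ε) ≤ H^1(C)/ε, where P(C,ε) is the maximal number of points x_1,...,x_n in C with pairwise disjoint open balls B(x_i,ε). -/
import Mathlib

open Metric MeasureTheory
open scoped ENNReal NNReal

/-- One-dimensional Hausdorff measure of a subset of a metric space
(with the Borel σ-algebra). -/
noncomputable def H1 (X : Type*) [MetricSpace X] : Set X → ℝ≥0∞ :=
  letI : MeasurableSpace X := borel X
  haveI : BorelSpace X := ⟨rfl⟩
  fun A => MeasureTheory.Measure.hausdorffMeasure 1 A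

/-- Packing number of a subset of a metric space: the supremum of cardinalities
of finite subsets of `A` whose open `ε`-balls are pairwise disjoint. -/
noncomputable def packingNumber {X : Type*} [MetricSpace X] (A : Set X) (ε : ℝ) : ℕ∞ :=
  ⨆ (s : Finset X) (_ : ↑s ⊆ A ∧ (s : Set X).Pairwise
      fun x y => Disjoint (Metric.ball x ε) (Metric.ball y ε)), (s.card : ℕ∞)

/-- Relative Steiner invariant of a subset `S` of a metric space `X`. -/
noncomputable def relSteiner (X : Type*) [MetricSpace X] (S : Set X) : ℝ≥0∞ :=
  sInf {r : ℝ≥0∞ | ∃ C : Set X, IsCompact C ∧ IsConnected C ∧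
    IsCompact (C ∪ S) ∧ IsConnected (C ∪ S) ∧ r = H1 X C}

/-- Absolute Steiner invariant of a compact metric space `S`. -/
noncomputable def absSteiner (S : Type*) [MetricSpace S] : ℝ≥0∞ :=
  sInf {r : ℝ≥0∞ | ∃ (X : Type) (_ : MetricSpace X) (ι : S → X),
    Isometry ι ∧ r = relSteiner X (Set.range ι)}

/-- Key lemma: a point of a continuum of diameter `> 2ε` carries at least `ε` of
one-dimensional Hausdorff measure within its `ε`-ball. -/
lemma h1_ball_ge {X : Type*} [MetricSpace X] [MeasurableSpace X] [BorelSpace X]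
    (C : Set X) (hconn : IsConnected C)
    (ε : ℝ) (hε : 0 < ε) (hε' : ε < Metric.diam C / 2) {x : X} (hx : x ∈ C) :
    ENNReal.ofReal ε ≤ μH[1] (C ∩ Metric.ball x ε) := by
  -- find a point at distance > ε from x
  obtain ⟨b, hb, hxb⟩ : ∃ b ∈ C, ε < dist x b := by
    by_contra h
    push_neg at h
    have : Metric.diam C ≤ 2 * ε := by
      apply Metric.diam_le_of_forall_dist_le (by linarith)
      intro p hp q hq
      calc dist p q ≤ dist p x + dist x q := dist_triangle p x q
        _ ≤ ε + ε := by
            have h1 := h p hp; have h2 := h q hq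
            rw [dist_comm x p] at h1; linarith
        _ = 2 * ε := by ring
    linarith
  set f : X → ℝ := fun y => dist x y with hf
  have hfc : Continuous f := Continuous.dist continuous_const continuous_id
  have himg : IsConnected (f '' C) := hconn.image f hfc.continuousOn
  have hIcc : Set.Icc (0 : ℝ) (dist x b) ⊆ f '' C := by
    apply himg.Icc_subset ⟨x, hx, by simp [hf]⟩ ⟨b, hb, rfl⟩
  have hsub : Set.Ico (0 : ℝ) ε ⊆ f '' (C ∩ Metric.ball x ε) := by
    intro t ht
    obtain ⟨y, hy, hyt⟩ := hIcc ⟨ht.1, le_of_lt (lt_of_lt_of_le ht.2 hxb.le)⟩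
    exact ⟨y, ⟨hy, by simp [Metric.mem_ball, dist_comm]; rw [← hyt] at ht; exact ht.2⟩, hyt⟩
  have hlip : LipschitzWith 1 f := LipschitzWith.dist_right x
  calc ENNReal.ofReal ε = volume (Set.Ico (0 : ℝ) ε) := by simp
    _ = μH[1] (Set.Ico (0 : ℝ) ε) := by rw [MeasureTheory.hausdorffMeasure_real]
    _ ≤ μH[1] (f '' (C ∩ Metric.ball x ε)) := measure_mono hsub
    _ ≤ (1 : ℝ≥0∞) ^ (1 : ℝ) * μH[1] (C ∩ Metric.ball x ε) :=
        hlip.hausdorffMeasure_image_le zero_le_one _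
    _ = μH[1] (C ∩ Metric.ball x ε) := by simp

/-- For a continuum `C` in a metric space with `diam C > 0` and `0 < ε < diam C / 2`,
the packing number satisfies `P(C,ε) ≤ H¹(C) / ε`. -/
theorem packing_le_h1_div (X : Type*) [MetricSpace X]
    (C : Set X) (hcomp : IsCompact C) (hconn : IsConnected C)
    (hdiam : 0 < Metric.diam C) (ε : ℝ) (hε : 0 < ε) (hε' : ε < Metric.diam C / 2) :
    (packingNumber C ε : ℝ≥0∞) ≤ H1 X C / ENNReal.ofReal ε := by
  letI : MeasurableSpace X := borel X
  haveI : BorelSpace X := ⟨rfl⟩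
  have hH1 : H1 X C = μH[1] C := rfl
  set B : ℝ≥0∞ := H1 X C / ENNReal.ofReal ε with hB
  -- each admissible finset has card bounded by B
  have key : ∀ s : Finset X, (↑s ⊆ C ∧ (s : Set X).Pairwise
      fun x y => Disjoint (Metric.ball x ε) (Metric.ball y ε)) →
      (s.card : ℝ≥0∞) ≤ B := by
    rintro s ⟨hsC, hsd⟩
    have hmul : (s.card : ℝ≥0∞) * ENNReal.ofReal ε ≤ μH[1] C := by
      have hmeas : ∀ x ∈ s, MeasurableSet (C ∩ Metric.ball x ε) := fun x _ =>
        hcomp.measurableSet.inter Metric.isOpen_ball.measurableSet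
      have hdisj : (s : Set X).PairwiseDisjoint (fun x => C ∩ Metric.ball x ε) := by
        intro a ha b hb hab
        exact ((hsd ha hb hab).mono (Set.inter_subset_right) (Set.inter_subset_right))
      calc (s.card : ℝ≥0∞) * ENNReal.ofReal ε
          = ∑ _x ∈ s, ENNReal.ofReal ε := by
            rw [Finset.sum_const, nsmul_eq_mul]
        _ ≤ ∑ x ∈ s, μH[1] (C ∩ Metric.ball x ε) := by
            apply Finset.sum_le_sum
            intro x hxs
            exact h1_ball_ge C hconn ε hε hε' (hsC hxs)
        _ = μH[1] (⋃ x ∈ s, C ∩ Metric.ball x ε) :=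
            (measure_biUnion_finset hdisj hmeas).symm
        _ ≤ μH[1] C := measure_mono (by
            intro y hy
            simp only [Set.mem_iUnion] at hy
            obtain ⟨i, _, hyi, _⟩ := hy
            exact hyi)
    rw [hB, hH1]
    exact (ENNReal.le_div_iff_mul_le
      (Or.inl (ENNReal.ofReal_pos.2 hε).ne') (Or.inl ENNReal.ofReal_ne_top)).2 hmul
  -- now pass from ℕ∞ supremum to ℝ≥0∞
  by_cases hBtop : B = ⊤
  · rw [hBtop]; exact le_top
  · have hbound : packingNumber C ε ≤ ((Nat.floor B.toReal : ℕ) : ℕ∞) := by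
      apply iSup_le; intro s; apply iSup_le; intro hs
      have h1 : (s.card : ℝ) ≤ B.toReal := by
        have := ENNReal.toReal_mono hBtop (key s hs)
        simpa using this
      exact_mod_cast Nat.le_floor h1
    calc (packingNumber C ε : ℝ≥0∞) ≤ ((Nat.floor B.toReal : ℕ) : ℝ≥0∞) := by
          exact_mod_cast ENat.toENNReal_mono hbound
      _ ≤ ENNReal.ofReal B.toReal := by
          rw [← ENNReal.ofReal_natCast]
          exact ENNReal.ofReal_le_ofReal (Nat.floor_le ENNReal.toReal_nonneg)
      _ = B := ENNReal.ofReal_toReal hBtop
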